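/- Let A and B be Hermitian n × n matrices with A positive semidefinite. Then the polynomial η(zA, −B) = Σ_S det(zA[S]) det(−B[S′]) (the sum over all subsets S of {1,…,n}, with S′ the complement) has all real roots (or is identically zero). -/

import Mathlib

open Polynomial ComplexOrder

/-- The principal submatrix of `A` with rows and columns indexed by `S`. -/
def principalSub {ι : Type*} (A : Matrix ι ι ℂ) (S : Finset ι) : Matrix S S ℂ :=
  A.submatrix Subtype.val Subtype.val

/-- `η(zA, B) = Σ_S det(A[S]) det(B[S']) z^{|S|}`, as a polynomial in `z`. -/
noncomputable def etaPoly {ι : Type*} [Fintype ι] [DecidableEq ι]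
    (A B : Matrix ι ι ℂ) : Polynomial ℂ :=
  ∑ S : Finset ι,
    Polynomial.C ((principalSub A S).det * (principalSub B Sᶜ).det) * Polynomial.X ^ S.card

namespace Stmt2Aux

open Matrix Complex

/-- principal submatrix over a general ring -/
def psub {R : Type*} {m : Type*} (M : Matrix m m R) (S : Finset m) : Matrix S S R :=
  M.submatrix Subtype.val Subtype.val

/-- Expansion of `det (diagonal d + M)` into principal minors. -/
theorem det_piecewise {R : Type*} [CommRing R] {m : Type*} [Fintype m] [DecidableEq m]
    (d : m → R) (M : Matrix m m R) (S : Finset m) :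
    Matrix.det (Matrix.of (S.piecewise (Matrix.diagonal d) M)) = (∏ i ∈ S, d i) * (psub M Sᶜ).det := by
  classical
  let e : {a // a ∈ S} ⊕ {a // ¬ a ∈ S} ≃ m := Equiv.sumCompl (· ∈ S)
  rw [← Matrix.det_submatrix_equiv_self e]
  have hblock : (Matrix.of (S.piecewise (Matrix.diagonal d) M)).submatrix e e
      = Matrix.fromBlocks (Matrix.diagonal fun i : {a // a ∈ S} => d i) 0
          (Matrix.of fun (i : {a // ¬ a ∈ S}) (j : {a // a ∈ S}) => M i j)
          (Matrix.of fun (i : {a // ¬ a ∈ S}) (j : {a // ¬ a ∈ S}) => M i j) := by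
    ext i j
    cases i with
    | inl i =>
      cases j with
      | inl j =>
        by_cases hij : (i : m) = j
        · simp [e, Matrix.submatrix_apply, Finset.piecewise, i.2, Matrix.diagonal, hij,
            Subtype.ext hij]
        · simp [e, Matrix.submatrix_apply, Finset.piecewise, i.2, Matrix.diagonal, hij,
            (mt (congrArg Subtype.val) hij : ¬ i = j)]
      | inr j =>
        have hij : (i : m) ≠ j := fun h => j.2 (h ▸ i.2)
        simp [e, Matrix.submatrix_apply, Finset.piecewise, i.2, Matrix.diagonal, hij]
    | inr i =>
      cases j with
      | inl j => simp [e, Matrix.submatrix_apply, Finset.piecewise, i.2]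
      | inr j => simp [e, Matrix.submatrix_apply, Finset.piecewise, i.2]
  rw [hblock, Matrix.det_fromBlocks_zero₁₂, Matrix.det_diagonal]
  congr 1
  · exact Finset.prod_coe_sort S d
  · let e2 : {a // a ∈ Sᶜ} ≃ {a // ¬ a ∈ S} := Equiv.subtypeEquivRight (fun a => by simp)
    rw [← Matrix.det_submatrix_equiv_self e2]
    rfl

theorem det_diagonal_add {R : Type*} [CommRing R] {m : Type*} [Fintype m] [DecidableEq m]
    (d : m → R) (M : Matrix m m R) :
    (Matrix.diagonal d + M).det
      = ∑ S : Finset m, (∏ i ∈ S, d i) * (psub M Sᶜ).det := by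
  classical
  have h1 : (Matrix.diagonal d + M).det
      = ∑ S : Finset m, (Matrix.of (S.piecewise (Matrix.diagonal d) M)).det :=
    (Matrix.detRowAlternating.toMultilinearMap.map_add_univ (Matrix.diagonal d) M)
  rw [h1]
  exact Finset.sum_congr rfl fun S _ => det_piecewise d M S

section Main

variable {n : ℕ}

noncomputable abbrev Rx (n : ℕ) := MvPolynomial (Fin n) (Polynomial ℂ)

/-- matrix `diag x + z • A` over `Rx` -/
noncomputable def MA (A : Matrix (Fin n) (Fin n) ℂ) : Matrix (Fin n) (Fin n) (Rx n) :=
  Matrix.diagonal (fun i => MvPolynomial.X i) +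
    Matrix.of (fun i j => MvPolynomial.C (Polynomial.C (A i j) * Polynomial.X))

/-- matrix `diag x + B` over `Rx` -/
noncomputable def MB (B : Matrix (Fin n) (Fin n) ℂ) : Matrix (Fin n) (Fin n) (Rx n) :=
  Matrix.diagonal (fun i => MvPolynomial.X i) +
    Matrix.of (fun i j => MvPolynomial.C (Polynomial.C (B i j)))

noncomputable def cST (A B : Matrix (Fin n) (Fin n) ℂ) (S T : Finset (Fin n)) : Polynomial ℂ :=
  Polynomial.X ^ (Sᶜ.card) * Polynomial.C ((psub A Sᶜ).det * (psub B Tᶜ).det)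

def eexp (S T : Finset (Fin n)) (j : Fin n) : ℕ :=
  (if j ∈ S then 1 else 0) + (if j ∈ T then 1 else 0)

noncomputable def op (u : ℝ) (i : Fin n) (q : Rx n) : Rx n :=
  MvPolynomial.C (Polynomial.C (u:ℂ)) * q + MvPolynomial.pderiv i q

noncomputable def nest (u : ℝ) (l : List (Fin n)) (q : Rx n) : Rx n := l.foldr (op u) q

noncomputable def opX (u : ℝ) (k : ℕ) (i : Fin n) : Rx n :=
  MvPolynomial.C (Polynomial.C (u:ℂ)) * MvPolynomial.X i ^ k +
    (k : Rx n) * MvPolynomial.X i ^ (k-1)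

noncomputable def evalCw (w : ℂ) : Rx n →+* Polynomial ℂ :=
  MvPolynomial.eval (fun _ => Polynomial.C w)

noncomputable def Ee (v : Fin n → ℂ) (z : ℂ) : Rx n →+* ℂ :=
  MvPolynomial.eval₂Hom (Polynomial.evalRingHom z) v

def gam (u : ℝ) (S T : Finset (Fin n)) : ℂ :=
  ∏ j : Fin n, ((u:ℂ) * (Complex.I*u)^(eexp S T j)
      + (eexp S T j) * (Complex.I*u)^(eexp S T j - 1))

noncomputable def Xi (A B : Matrix (Fin n) (Fin n) ℂ) (u : ℝ) : Polynomial ℂ :=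
  evalCw (Complex.I * u) (nest u (List.finRange n) ((MA A).det * (MB B).det))

theorem detMA (A : Matrix (Fin n) (Fin n) ℂ) :
    (MA A).det = ∑ S : Finset (Fin n), (∏ i ∈ S, MvPolynomial.X i) *
      MvPolynomial.C (Polynomial.X ^ (Sᶜ.card) * Polynomial.C ((psub A Sᶜ).det)) := by
  rw [MA, det_diagonal_add]
  refine Finset.sum_congr rfl fun S _ => ?_
  congr 1
  have h1 : psub (Matrix.of fun i j =>
        (MvPolynomial.C (Polynomial.C (A i j) * Polynomial.X) : Rx n)) Sᶜ
      = ((Matrix.of fun (i j : {a // a ∈ Sᶜ}) =>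
          (Polynomial.C (A (i:Fin n) (j:Fin n)) * Polynomial.X)).map
            (MvPolynomial.C : Polynomial ℂ →+* Rx n)) := rfl
  rw [h1,
    show ((Matrix.of fun (i j : {a // a ∈ Sᶜ}) =>
          (Polynomial.C (A (i:Fin n) (j:Fin n)) * Polynomial.X)).map
            (MvPolynomial.C : Polynomial ℂ →+* Rx n))
      = (MvPolynomial.C : Polynomial ℂ →+* Rx n).mapMatrix
          (Matrix.of fun (i j : {a // a ∈ Sᶜ}) =>
            (Polynomial.C (A (i:Fin n) (j:Fin n)) * Polynomial.X)) from rfl,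
    ← RingHom.map_det]
  congr 1
  have h2 : (Matrix.of fun (i j : {a // a ∈ Sᶜ}) =>
        (Polynomial.C (A (i:Fin n) (j:Fin n)) * Polynomial.X))
      = (Polynomial.X : Polynomial ℂ) • ((psub A Sᶜ).map (Polynomial.C : ℂ →+* Polynomial ℂ)) := by
    ext i j
    simp [psub, Matrix.smul_apply, Matrix.map_apply]
  rw [h2, Matrix.det_smul,
    show ((psub A Sᶜ).map (Polynomial.C : ℂ →+* Polynomial ℂ))
      = (Polynomial.C : ℂ →+* Polynomial ℂ).mapMatrix (psub A Sᶜ) from rfl,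
    ← RingHom.map_det]
  rw [Fintype.card_coe]

theorem detMB (B : Matrix (Fin n) (Fin n) ℂ) :
    (MB B).det = ∑ T : Finset (Fin n), (∏ i ∈ T, MvPolynomial.X i) *
      MvPolynomial.C (Polynomial.C ((psub B Tᶜ).det)) := by
  rw [MB, det_diagonal_add]
  refine Finset.sum_congr rfl fun T _ => ?_
  congr 1
  have h1 : psub (Matrix.of fun i j =>
        (MvPolynomial.C (Polynomial.C (B i j)) : Rx n)) Tᶜ
      = ((psub B Tᶜ).map ((MvPolynomial.C : Polynomial ℂ →+* Rx n).comp
          (Polynomial.C : ℂ →+* Polynomial ℂ))) := rfl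
  rw [h1,
    show ((psub B Tᶜ).map ((MvPolynomial.C : Polynomial ℂ →+* Rx n).comp
          (Polynomial.C : ℂ →+* Polynomial ℂ)))
      = ((MvPolynomial.C : Polynomial ℂ →+* Rx n).comp
          (Polynomial.C : ℂ →+* Polynomial ℂ)).mapMatrix (psub B Tᶜ) from rfl,
    ← RingHom.map_det]
  rfl

theorem prodX_eq (S T : Finset (Fin n)) :
    (∏ i ∈ S, MvPolynomial.X (R := Polynomial ℂ) i) * (∏ i ∈ T, MvPolynomial.X i)
      = ∏ j : Fin n, MvPolynomial.X j ^ (eexp S T j) := by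
  have h : ∀ (W : Finset (Fin n)),
      (∏ j : Fin n, MvPolynomial.X (R := Polynomial ℂ) j ^ (if j ∈ W then 1 else 0))
        = ∏ i ∈ W, MvPolynomial.X i := by
    intro W
    simp only [pow_ite, pow_one, pow_zero]
    simp [Finset.prod_ite_mem, Finset.univ_inter]
  simp only [eexp, pow_add, Finset.prod_mul_distrib, h]

theorem p_eq (A B : Matrix (Fin n) (Fin n) ℂ) :
    (MA A).det * (MB B).det = ∑ S : Finset (Fin n), ∑ T : Finset (Fin n),
      (∏ j : Fin n, MvPolynomial.X j ^ (eexp S T j)) * MvPolynomial.C (cST A B S T) := by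
  rw [detMA, detMB, Finset.sum_mul_sum]
  refine Finset.sum_congr rfl fun S _ => Finset.sum_congr rfl fun T _ => ?_
  rw [← prodX_eq, cST]
  simp only [_root_.map_mul]
  ring

theorem op_sum (u : ℝ) (i : Fin n) {α : Type*} (s : Finset α) (f : α → Rx n) :
    op u i (∑ x ∈ s, f x) = ∑ x ∈ s, op u i (f x) := by
  simp [op, Finset.mul_sum, map_sum, Finset.sum_add_distrib]

theorem op_mul_C (u : ℝ) (i : Fin n) (c : Polynomial ℂ) (q : Rx n) :
    op u i (q * MvPolynomial.C c) = op u i q * MvPolynomial.C c := by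
  simp only [op, MvPolynomial.pderiv_mul, MvPolynomial.pderiv_C]
  ring

theorem nest_cons (u : ℝ) (i : Fin n) (l : List (Fin n)) (q : Rx n) :
    nest u (i :: l) q = op u i (nest u l q) := rfl

theorem nest_sum (u : ℝ) (l : List (Fin n)) {α : Type*} (s : Finset α) (f : α → Rx n) :
    nest u l (∑ x ∈ s, f x) = ∑ x ∈ s, nest u l (f x) := by
  induction l with
  | nil => rfl
  | cons i l ih => rw [nest_cons, ih, op_sum]; rfl

theorem nest_mul_C (u : ℝ) (l : List (Fin n)) (c : Polynomial ℂ) (q : Rx n) :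
    nest u l (q * MvPolynomial.C c) = nest u l q * MvPolynomial.C c := by
  induction l with
  | nil => rfl
  | cons i l ih => rw [nest_cons, ih, op_mul_C]; rfl

theorem pderiv_Xpow_ne {i j : Fin n} (h : j ≠ i) (k : ℕ) :
    MvPolynomial.pderiv i (MvPolynomial.X (R := Polynomial ℂ) j ^ k) = 0 := by
  simp [MvPolynomial.pderiv_pow, MvPolynomial.pderiv_X_of_ne h]

theorem pderiv_opX_ne (u : ℝ) (k : ℕ) {i j : Fin n} (h : j ≠ i) :
    MvPolynomial.pderiv i (opX u k j) = 0 := by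
  have hn : MvPolynomial.pderiv i ((k : Rx n)) = 0 := by
    rw [← map_natCast (MvPolynomial.C : Polynomial ℂ →+* Rx n)]
    exact MvPolynomial.pderiv_C
  simp [opX, MvPolynomial.pderiv_mul, MvPolynomial.pderiv_C, pderiv_Xpow_ne h, hn]

theorem pderiv_prod {i : Fin n} (F : Fin n → Rx n)
    (h : ∀ j, j ≠ i → MvPolynomial.pderiv i (F j) = 0) :
    MvPolynomial.pderiv i (∏ j, F j)
      = (∏ j ∈ Finset.univ.erase i, F j) * MvPolynomial.pderiv i (F i) := by
  rw [← Finset.mul_prod_erase Finset.univ F (Finset.mem_univ i), MvPolynomial.pderiv_mul]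
  have hz : MvPolynomial.pderiv i (∏ j ∈ Finset.univ.erase i, F j) = 0 := by
    refine Finset.prod_induction F (fun q => MvPolynomial.pderiv i q = 0)
      (fun a b ha hb => by
        show MvPolynomial.pderiv i (a * b) = 0
        rw [MvPolynomial.pderiv_mul, ha, hb]; ring)
      MvPolynomial.pderiv_one ?_
    intro j hj
    exact h j (Finset.ne_of_mem_erase hj)
  rw [hz]
  ring

theorem nest_prod (u : ℝ) (l : List (Fin n)) (hnd : l.Nodup) (e : Fin n → ℕ) :
    nest u l (∏ j, MvPolynomial.X j ^ e j)
      = ∏ j, (if j ∈ l then opX u (e j) j else MvPolynomial.X j ^ e j) := by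
  induction l with
  | nil => simp [nest]
  | cons i l ih =>
    have hi : i ∉ l := (List.nodup_cons.mp hnd).1
    have hl : l.Nodup := (List.nodup_cons.mp hnd).2
    rw [nest_cons, ih hl]
    set F : Fin n → Rx n := fun j => if j ∈ l then opX u (e j) j else MvPolynomial.X j ^ e j
      with hF
    have hFi : F i = MvPolynomial.X i ^ e i := by simp [hF, hi]
    have hder : ∀ j, j ≠ i → MvPolynomial.pderiv i (F j) = 0 := by
      intro j hj
      by_cases hjl : j ∈ l <;> simp [hF, hjl, pderiv_opX_ne u _ hj, pderiv_Xpow_ne hj]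
    have hGF : ∀ j, (if j ∈ i :: l then opX u (e j) j else MvPolynomial.X j ^ e j)
        = Function.update F i (opX u (e i) i) j := by
      intro j
      rcases eq_or_ne j i with rfl | hj
      · simp [Function.update_self, List.mem_cons]
      · simp [Function.update_of_ne hj, hF, List.mem_cons, hj]
    rw [Finset.prod_congr rfl (fun j _ => hGF j)]
    rw [Finset.prod_update_of_mem (Finset.mem_univ i)]
    rw [op, pderiv_prod F hder, hFi,
      ← Finset.mul_prod_erase Finset.univ F (Finset.mem_univ i), hFi]
    have hps : MvPolynomial.pderiv i (MvPolynomial.X (R := Polynomial ℂ) i ^ e i)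
        = (e i : Rx n) * MvPolynomial.X i ^ (e i - 1) := by
      rw [MvPolynomial.pderiv_pow, MvPolynomial.pderiv_X_self, mul_one]
    simp only [hps, opX, op, Finset.sdiff_singleton_eq_erase]
    ring

theorem evalCw_opX (w : ℂ) (u : ℝ) (k : ℕ) (i : Fin n) :
    evalCw w (opX u k i) = Polynomial.C ((u:ℂ) * w^k + k * w^(k-1)) := by
  simp only [opX, evalCw, _root_.map_add, _root_.map_mul, _root_.map_pow, _root_.map_natCast,
    MvPolynomial.eval_C, MvPolynomial.eval_X]

theorem evalCw_C (w : ℂ) (c : Polynomial ℂ) :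
    evalCw (n := n) w (MvPolynomial.C c) = c := by
  simp [evalCw]

/-- main explicit formula for `Xi`. -/
theorem Xi_eq (A B : Matrix (Fin n) (Fin n) ℂ) (u : ℝ) :
    Xi A B u = ∑ S : Finset (Fin n), ∑ T : Finset (Fin n),
      Polynomial.C (gam u S T) * cST A B S T := by
  rw [Xi, p_eq, nest_sum, map_sum]
  refine Finset.sum_congr rfl fun S _ => ?_
  rw [nest_sum, map_sum]
  refine Finset.sum_congr rfl fun T _ => ?_
  rw [nest_mul_C, _root_.map_mul, evalCw_C,
    nest_prod u (List.finRange n) (List.nodup_finRange n)]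
  have h1 : (∏ j : Fin n, (if j ∈ List.finRange n then opX u (eexp S T j) j
      else MvPolynomial.X j ^ (eexp S T j))) = ∏ j : Fin n, opX u (eexp S T j) j := by
    refine Finset.prod_congr rfl fun j _ => ?_
    simp [List.mem_finRange]
  rw [h1, _root_.map_prod]
  have h2 : (∏ j : Fin n, evalCw (Complex.I * u) (opX u (eexp S T j) j))
      = Polynomial.C (gam u S T) := by
    rw [gam, _root_.map_prod]
    exact Finset.prod_congr rfl fun j _ => evalCw_opX _ u _ j
  rw [h2]

theorem sum_im_nonpos (s : Multiset ℂ) (h : ∀ x ∈ s, x.im ≤ 0) : s.sum.im ≤ 0 := by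
  induction s using Multiset.induction_on with
  | empty => simp
  | cons a t ih =>
    rw [Multiset.sum_cons, Complex.add_im]
    have := h a (Multiset.mem_cons_self a t)
    have ht := ih fun x hx => h x (Multiset.mem_cons_of_mem hx)
    linarith

theorem sum_im_neg (s : Multiset ℂ) (hs : s ≠ 0) (h : ∀ x ∈ s, x.im < 0) : s.sum.im < 0 := by
  obtain ⟨a, ha⟩ := Multiset.exists_mem_of_ne_zero hs
  obtain ⟨t, rfl⟩ := Multiset.exists_cons_of_mem ha
  rw [Multiset.sum_cons, Complex.add_im]
  have h1 := h a (Multiset.mem_cons_self a t)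
  have h2 := sum_im_nonpos t fun x hx => (h x (Multiset.mem_cons_of_mem hx)).le
  linarith

theorem deriv_prod_eval (s : Multiset ℂ) (t : ℂ) (ht : ∀ r ∈ s, t - r ≠ 0) :
    (Polynomial.derivative (s.map fun a => Polynomial.X - Polynomial.C a).prod).eval t
      = ((s.map fun a => Polynomial.X - Polynomial.C a).prod.eval t)
        * (s.map fun r => (t - r)⁻¹).sum := by
  induction s using Multiset.induction_on with
  | empty => simp
  | cons a s ih =>
    have ha : t - a ≠ 0 := ht a (Multiset.mem_cons_self a s)
    have hs : ∀ r ∈ s, t - r ≠ 0 := fun r hr => ht r (Multiset.mem_cons_of_mem hr)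
    simp only [Multiset.map_cons, Multiset.prod_cons, Multiset.sum_cons,
      Polynomial.derivative_mul, Polynomial.eval_add, Polynomial.eval_mul, Polynomial.eval_sub,
      Polynomial.eval_X, Polynomial.eval_C, Polynomial.derivative_sub, Polynomial.derivative_X,
      Polynomial.derivative_C, Polynomial.eval_one, Polynomial.eval_zero, ih hs]
    field_simp
    ring

theorem eval_prod_roots (s : Multiset ℂ) (t : ℂ) :
    ((s.map fun a => Polynomial.X - Polynomial.C a).prod.eval t)
      = (s.map fun a => t - a).prod := by
  rw [Polynomial.eval_multiset_prod, Multiset.map_map]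
  congr 1
  ext a
  simp

theorem keyU (p : Polynomial ℂ) (hp : ∀ t : ℂ, 0 < t.im → p.eval t ≠ 0) (u : ℝ) (hu : 0 < u)
    (t₀ : ℂ) (ht₀ : 0 < t₀.im) :
    (u : ℂ) * p.eval t₀ + (Polynomial.derivative p).eval t₀ ≠ 0 := by
  have hp0 : p ≠ 0 := by
    intro h
    exact hp Complex.I (by simp) (by simp [h])
  have hroots : ∀ r ∈ p.roots, r.im ≤ 0 := by
    intro r hr
    by_contra h
    exact hp r (lt_of_not_ge h) ((Polynomial.mem_roots'.mp hr).2)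
  have hfac := (IsAlgClosed.splits p).eq_prod_roots
  set s := p.roots with hs
  have hts : ∀ r ∈ s, t₀ - r ≠ 0 := by
    intro r hr h
    have : t₀ = r := by
      have := sub_eq_zero.mp h
      exact this
    rw [this] at ht₀
    exact absurd (hroots r hr) (not_le.mpr ht₀)
  have hc : p.leadingCoeff ≠ 0 := Polynomial.leadingCoeff_ne_zero.mpr hp0
  have hP : ((s.map fun a => Polynomial.X - Polynomial.C a).prod.eval t₀) ≠ 0 := by
    rw [eval_prod_roots]
    apply Multiset.prod_ne_zero
    intro h0
    obtain ⟨r, hr, hr0⟩ := Multiset.mem_map.mp h0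
    exact hts r hr hr0
  have hev : p.eval t₀ = p.leadingCoeff *
      ((s.map fun a => Polynomial.X - Polynomial.C a).prod.eval t₀) := by
    conv_lhs => rw [hfac]
    simp
  have hdev : (Polynomial.derivative p).eval t₀ = p.leadingCoeff *
      (((s.map fun a => Polynomial.X - Polynomial.C a).prod.eval t₀)
        * (s.map fun r => (t₀ - r)⁻¹).sum) := by
    conv_lhs => rw [hfac]
    rw [Polynomial.derivative_C_mul, Polynomial.eval_mul, Polynomial.eval_C,
      deriv_prod_eval s t₀ hts]
  rw [hev, hdev]
  have hkey : ((u:ℂ) + (s.map fun r => (t₀ - r)⁻¹).sum) ≠ 0 := by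
    rcases eq_or_ne s 0 with hs0 | hsne
    · rw [hs0]
      simpa using (by exact_mod_cast hu.ne' : (u:ℂ) ≠ 0)
    · intro h0
      have him : ((u:ℂ) + (s.map fun r => (t₀ - r)⁻¹).sum).im < 0 := by
        rw [Complex.add_im]
        have : ((s.map fun r => (t₀ - r)⁻¹).sum).im < 0 := by
          apply sum_im_neg
          · simpa using hsne
          · intro x hx
            obtain ⟨r, hr, rfl⟩ := Multiset.mem_map.mp hx
            rw [Complex.inv_im]
            have him2 : 0 < (t₀ - r).im := by
              rw [Complex.sub_im]
              have := hroots r hr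
              linarith
            have hnormSq : 0 < Complex.normSq (t₀ - r) :=
              Complex.normSq_pos.mpr (hts r hr)
            exact div_neg_of_neg_of_pos (by linarith) hnormSq
        simp [Complex.ofReal_im]
        linarith [this]
      rw [h0] at him
      simp at him
  have hrw : (u:ℂ) * (p.leadingCoeff * ((s.map fun a => Polynomial.X - Polynomial.C a).prod.eval t₀))
      + p.leadingCoeff * (((s.map fun a => Polynomial.X - Polynomial.C a).prod.eval t₀)
        * (s.map fun r => (t₀ - r)⁻¹).sum)
      = (p.leadingCoeff * ((s.map fun a => Polynomial.X - Polynomial.C a).prod.eval t₀))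
        * ((u:ℂ) + (s.map fun r => (t₀ - r)⁻¹).sum) := by ring
  rw [hrw]
  exact mul_ne_zero (mul_ne_zero hc hP) hkey

noncomputable def psi (v : Fin n → ℂ) (z : ℂ) (i : Fin n) : Rx n →+* Polynomial ℂ :=
  MvPolynomial.eval₂Hom ((Polynomial.C : ℂ →+* Polynomial ℂ).comp (Polynomial.evalRingHom z))
    (fun j => if j = i then Polynomial.X else Polynomial.C (v j))

theorem psi_eval (v : Fin n → ℂ) (z : ℂ) (i : Fin n) (q : Rx n) (t : ℂ) :
    (psi v z i q).eval t = Ee (Function.update v i t) z q := by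
  have hhom : (Polynomial.evalRingHom t).comp
      ((Polynomial.C : ℂ →+* Polynomial ℂ).comp (Polynomial.evalRingHom z))
      = Polynomial.evalRingHom z := by
    refine RingHom.ext fun q0 => ?_
    simp
  have hg : ((Polynomial.evalRingHom t) ∘
      fun j => if j = i then Polynomial.X else Polynomial.C (v j)) = Function.update v i t := by
    funext j
    rcases eq_or_ne j i with rfl | hj
    · simp [Function.update_self]
    · simp [hj, Function.update_of_ne hj]
  show (Polynomial.evalRingHom t) (MvPolynomial.eval₂ _ _ q) = _
  rw [MvPolynomial.eval₂_comp_left (Polynomial.evalRingHom t), hhom, hg]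
  rfl

theorem psi_derivative (v : Fin n → ℂ) (z : ℂ) (i : Fin n) (q : Rx n) :
    Polynomial.derivative (psi v z i q) = psi v z i (MvPolynomial.pderiv i q) := by
  induction q using MvPolynomial.induction_on with
  | C a => simp [psi, MvPolynomial.pderiv_C]
  | add p q ihp ihq => simp only [_root_.map_add, Polynomial.derivative_add, ihp, ihq]
  | mul_X p j ih =>
    rw [_root_.map_mul, Polynomial.derivative_mul, ih, MvPolynomial.pderiv_mul, _root_.map_add,
      _root_.map_mul, _root_.map_mul]
    rcases eq_or_ne j i with rfl | hj
    · have h1 : psi v z j (MvPolynomial.X j) = Polynomial.X := by simp [psi]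
      have h2 : MvPolynomial.pderiv j (MvPolynomial.X (R := Polynomial ℂ) j) = 1 :=
        MvPolynomial.pderiv_X_self j
      rw [h1, h2, Polynomial.derivative_X, _root_.map_one]
      try ring
    · have h1 : psi v z i (MvPolynomial.X j) = Polynomial.C (v j) := by simp [psi, hj]
      have h2 : MvPolynomial.pderiv i (MvPolynomial.X (R := Polynomial ℂ) j) = 0 :=
        MvPolynomial.pderiv_X_of_ne hj
      rw [h1, h2, Polynomial.derivative_C, _root_.map_zero]
      try ring

def Stab (q : Rx n) : Prop :=
  ∀ (v : Fin n → ℂ) (z : ℂ), (∀ i, 0 < (v i).im) → 0 < z.im → Ee v z q ≠ 0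

theorem Ee_C (v : Fin n → ℂ) (z : ℂ) (c : Polynomial ℂ) :
    Ee v z (MvPolynomial.C c) = c.eval z := by
  simp [Ee]

theorem stab_op {q : Rx n} (hq : Stab q) {u : ℝ} (hu : 0 < u) (i : Fin n) :
    Stab (op u i q) := by
  intro v z hv hz
  have hEe : Ee v z (op u i q) = (u:ℂ) * Ee v z q + Ee v z (MvPolynomial.pderiv i q) := by
    simp only [op, _root_.map_add, _root_.map_mul, Ee_C]
    simp
  set r := psi v z i q with hrdef
  have hr : ∀ t : ℂ, 0 < t.im → r.eval t ≠ 0 := by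
    intro t ht
    rw [hrdef, psi_eval]
    refine hq _ z (fun j => ?_) hz
    rcases eq_or_ne j i with rfl | hj
    · simpa [Function.update_self] using ht
    · simpa [Function.update_of_ne hj] using hv j
  have h1 : Ee v z q = r.eval (v i) := by
    rw [hrdef, psi_eval, Function.update_eq_self]
  have h2 : Ee v z (MvPolynomial.pderiv i q) = (Polynomial.derivative r).eval (v i) := by
    rw [hrdef, psi_derivative, psi_eval, Function.update_eq_self]
  rw [hEe, h1, h2]
  exact keyU r hr u hu (v i) (hv i)

theorem stab_nest {q : Rx n} (hq : Stab q) {u : ℝ} (hu : 0 < u) (l : List (Fin n)) :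
    Stab (nest u l q) := by
  induction l with
  | nil => exact hq
  | cons i l ih => exact stab_op ih hu i

theorem detA_ne (A : Matrix (Fin n) (Fin n) ℂ) (hA : A.PosSemidef) (v : Fin n → ℂ) (z : ℂ)
    (hv : ∀ i, 0 < (v i).im) (hz : 0 < z.im) :
    (Matrix.diagonal v + Matrix.of fun i j => A i j * z).det ≠ 0 := by
  intro hdet
  obtain ⟨w, hw0, hw⟩ := (Matrix.exists_mulVec_eq_zero_iff).mpr hdet
  have hdot : dotProduct (star w)
      ((Matrix.diagonal v + Matrix.of fun i j => A i j * z) *ᵥ w) = 0 := by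
    rw [hw, dotProduct_zero]
  rw [Matrix.add_mulVec, dotProduct_add] at hdot
  have h1 : star w ⬝ᵥ (Matrix.diagonal v *ᵥ w)
      = ∑ i, v i * (Complex.normSq (w i) : ℂ) := by
    unfold dotProduct
    refine Finset.sum_congr rfl fun i _ => ?_
    rw [Matrix.mulVec_diagonal]
    have : (star w) i = (starRingEnd ℂ) (w i) := rfl
    rw [this]
    rw [Complex.normSq_eq_conj_mul_self]
    ring
  have hofz : (Matrix.of fun i j => A i j * z) = z • A := by
    ext i j
    simp [mul_comm]
  have h2 : star w ⬝ᵥ ((Matrix.of fun i j => A i j * z) *ᵥ w)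
      = z * (star w ⬝ᵥ (A *ᵥ w)) := by
    rw [hofz, Matrix.smul_mulVec, dotProduct_smul]
    simp
  rw [h1, h2] at hdot
  set a := star w ⬝ᵥ (A *ᵥ w) with hadef
  have ha := hA.dotProduct_mulVec_nonneg w
  rw [Complex.le_def] at ha
  have haim : a.im = 0 := ha.2.symm
  have hare : 0 ≤ a.re := by simpa using ha.1
  have him := congrArg Complex.im hdot
  rw [Complex.add_im, Complex.im_sum, Complex.mul_im, haim] at him
  simp only [mul_zero, add_zero] at him
  have hterms : ∀ i, (v i * (Complex.normSq (w i) : ℂ)).im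
      = (v i).im * Complex.normSq (w i) := by
    intro i
    rw [Complex.mul_im]
    simp
  rw [Finset.sum_congr rfl fun i _ => hterms i] at him
  obtain ⟨i0, hi0⟩ := Function.ne_iff.mp hw0
  have hpos : 0 < ∑ i, (v i).im * Complex.normSq (w i) := by
    apply Finset.sum_pos'
    · intro i _
      exact mul_nonneg (hv i).le (Complex.normSq_nonneg _)
    · exact ⟨i0, Finset.mem_univ i0, mul_pos (hv i0) (Complex.normSq_pos.mpr hi0)⟩
  nlinarith [mul_nonneg hz.le hare]

theorem detB_ne (B : Matrix (Fin n) (Fin n) ℂ) (hB : B.IsHermitian) (v : Fin n → ℂ)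
    (hv : ∀ i, 0 < (v i).im) :
    (Matrix.diagonal v + B).det ≠ 0 := by
  intro hdet
  obtain ⟨w, hw0, hw⟩ := (Matrix.exists_mulVec_eq_zero_iff).mpr hdet
  have hdot : dotProduct (star w) ((Matrix.diagonal v + B) *ᵥ w) = 0 := by
    rw [hw, dotProduct_zero]
  rw [Matrix.add_mulVec, dotProduct_add] at hdot
  have h1 : star w ⬝ᵥ (Matrix.diagonal v *ᵥ w)
      = ∑ i, v i * (Complex.normSq (w i) : ℂ) := by
    unfold dotProduct
    refine Finset.sum_congr rfl fun i _ => ?_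
    rw [Matrix.mulVec_diagonal]
    have : (star w) i = (starRingEnd ℂ) (w i) := rfl
    rw [this, Complex.normSq_eq_conj_mul_self]
    ring
  set b := star w ⬝ᵥ (B *ᵥ w) with hbdef
  have hbstar : star b = b := by
    calc star b = star (star w ⬝ᵥ (B *ᵥ w)) := by rw [hbdef]
      _ = star (B *ᵥ w) ⬝ᵥ w := (star_dotProduct _ _).symm
      _ = (star w ᵥ* Bᴴ) ⬝ᵥ w := by rw [Matrix.star_mulVec]
      _ = (star w ᵥ* B) ⬝ᵥ w := by rw [show Bᴴ = B from hB]
      _ = star w ⬝ᵥ (B *ᵥ w) := (dotProduct_mulVec _ _ _).symm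
      _ = b := hbdef.symm
  have hbim : b.im = 0 := by
    have := congrArg Complex.im hbstar
    simp [Complex.conj_im] at this
    linarith
  rw [h1] at hdot
  have him := congrArg Complex.im hdot
  rw [Complex.add_im, Complex.im_sum, hbim] at him
  simp only [add_zero, Complex.zero_im] at him
  have hterms : ∀ i, (v i * (Complex.normSq (w i) : ℂ)).im
      = (v i).im * Complex.normSq (w i) := by
    intro i
    rw [Complex.mul_im]
    simp
  rw [Finset.sum_congr rfl fun i _ => hterms i] at him
  obtain ⟨i0, hi0⟩ := Function.ne_iff.mp hw0
  have hpos : 0 < ∑ i, (v i).im * Complex.normSq (w i) := by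
    apply Finset.sum_pos'
    · intro i _
      exact mul_nonneg (hv i).le (Complex.normSq_nonneg _)
    · exact ⟨i0, Finset.mem_univ i0, mul_pos (hv i0) (Complex.normSq_pos.mpr hi0)⟩
  linarith

theorem Ee_MA (A : Matrix (Fin n) (Fin n) ℂ) (v : Fin n → ℂ) (z : ℂ) :
    Ee v z ((MA A).det)
      = (Matrix.diagonal v + Matrix.of fun i j => A i j * z).det := by
  rw [show Ee v z ((MA A).det) = ((Ee v z).mapMatrix (MA A)).det from RingHom.map_det _ _]
  congr 1
  ext i j
  simp only [RingHom.mapMatrix_apply, Matrix.map_apply, Matrix.add_apply, Matrix.of_apply, MA,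
    _root_.map_add]
  rcases eq_or_ne i j with rfl | hij
  · simp [Ee, Matrix.diagonal_apply_eq]
  · simp [Ee, Matrix.diagonal_apply_ne _ hij, hij]

theorem Ee_MB (B : Matrix (Fin n) (Fin n) ℂ) (v : Fin n → ℂ) (z : ℂ) :
    Ee v z ((MB B).det) = (Matrix.diagonal v + B).det := by
  rw [show Ee v z ((MB B).det) = ((Ee v z).mapMatrix (MB B)).det from RingHom.map_det _ _]
  congr 1
  ext i j
  simp only [RingHom.mapMatrix_apply, Matrix.map_apply, Matrix.add_apply, Matrix.of_apply, MB,
    _root_.map_add]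
  rcases eq_or_ne i j with rfl | hij
  · simp [Ee, Matrix.diagonal_apply_eq]
  · simp [Ee, Matrix.diagonal_apply_ne _ hij, hij]

theorem stab_base (A B : Matrix (Fin n) (Fin n) ℂ) (hA : A.PosSemidef) (hB : B.IsHermitian) :
    Stab ((MA A).det * (MB (-B)).det) := by
  intro v z hv hz
  rw [_root_.map_mul]
  apply mul_ne_zero
  · rw [Ee_MA]
    exact detA_ne A hA v z hv hz
  · rw [Ee_MB]
    exact detB_ne (-B) hB.neg v hv

/-- stability of `Xi` -/
theorem stab_Xi (A B : Matrix (Fin n) (Fin n) ℂ) (hA : A.PosSemidef) (hB : B.IsHermitian)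
    (u : ℝ) (hu : 0 < u) :
    ∀ z : ℂ, 0 < z.im → (Xi A (-B) u).eval z ≠ 0 := by
  intro z hz
  have hXi : (Xi A (-B) u).eval z
      = Ee (fun _ => Complex.I * u) z (nest u (List.finRange n)
          ((MA A).det * (MB (-B)).det)) := by
    rw [Xi]
    show (Polynomial.evalRingHom z) (MvPolynomial.eval₂ (RingHom.id (Polynomial ℂ))
        (fun _ : Fin n => Polynomial.C (Complex.I * (u:ℂ)))
        (nest u (List.finRange n) ((MA A).det * (MB (-B)).det))) = _
    rw [MvPolynomial.eval₂_comp_left (Polynomial.evalRingHom z), RingHom.comp_id]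
    have hfun : ((Polynomial.evalRingHom z) ∘ fun _ : Fin n => Polynomial.C (Complex.I * (u:ℂ)))
        = fun _ : Fin n => Complex.I * (u:ℂ) := by
      funext j
      simp
    rw [hfun]
    rfl
  rw [hXi]
  refine stab_nest (stab_base A B hA hB) hu (List.finRange n) _ z (fun i => ?_) hz
  have : (Complex.I * (u:ℂ)).im = u := by simp
  rw [this]
  exact hu

theorem deg_Xi (A B : Matrix (Fin n) (Fin n) ℂ) (u : ℝ) : (Xi A B u).natDegree ≤ n := by
  rw [Xi_eq]
  refine Polynomial.natDegree_sum_le_of_forall_le _ _ fun S _ => ?_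
  refine Polynomial.natDegree_sum_le_of_forall_le _ _ fun T _ => ?_
  refine le_trans (Polynomial.natDegree_mul_le) ?_
  rw [Polynomial.natDegree_C, zero_add]
  refine le_trans (Polynomial.natDegree_mul_le) ?_
  rw [Polynomial.natDegree_C, add_zero, Polynomial.natDegree_X_pow]
  exact le_trans (Finset.card_le_univ _) (by simp)

theorem gam_zero (S T : Finset (Fin n)) : gam 0 S T = if T = Sᶜ then 1 else 0 := by
  unfold gam
  rcases eq_or_ne T Sᶜ with rfl | hT
  · rw [if_pos rfl]
    apply Finset.prod_eq_one
    intro j _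
    have he : eexp S Sᶜ j = 1 := by
      unfold eexp
      by_cases hj : j ∈ S <;> simp [hj, Finset.mem_compl]
    rw [he]
    simp
  · rw [if_neg hT]
    have hex : ∃ j, eexp S T j ≠ 1 := by
      by_contra hall
      push_neg at hall
      apply hT
      ext j
      have := hall j
      unfold eexp at this
      by_cases hj : j ∈ S <;> by_cases hj' : j ∈ T <;>
        simp [hj, hj', Finset.mem_compl] at this ⊢
    obtain ⟨j, hj⟩ := hex
    apply Finset.prod_eq_zero (Finset.mem_univ j)
    have he : eexp S T j = 0 ∨ eexp S T j = 2 := by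
      unfold eexp at hj ⊢
      by_cases h1 : j ∈ S <;> by_cases h2 : j ∈ T <;> simp [h1, h2] at hj ⊢
    rcases he with h | h <;> rw [h] <;> norm_num

def complEquiv : Finset (Fin n) ≃ Finset (Fin n) :=
  ⟨fun S => Sᶜ, fun S => Sᶜ, fun S => compl_compl S, fun S => compl_compl S⟩

theorem sum_cST_eval (A B : Matrix (Fin n) (Fin n) ℂ) (ζ : ℂ) :
    (∑ S : Finset (Fin n), (cST A (-B) S Sᶜ).eval ζ) = (etaPoly A (-B)).eval ζ := by
  rw [etaPoly, Polynomial.eval_finset_sum]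
  refine Fintype.sum_equiv complEquiv _ _ fun S => ?_
  show (cST A (-B) S Sᶜ).eval ζ = _
  rw [cST]
  have h1 : (Sᶜ)ᶜ = S := compl_compl S
  rw [h1]
  have h2 : psub A Sᶜ = principalSub A Sᶜ := rfl
  have h3 : psub (-B) S = principalSub (-B) S := rfl
  rw [h2, h3]
  show (Polynomial.X ^ Sᶜ.card *
    Polynomial.C ((principalSub A Sᶜ).det * (principalSub (-B) S).det)).eval ζ
      = (Polynomial.C ((principalSub A (complEquiv S)).det *
          (principalSub (-B) (complEquiv S)ᶜ).det) * Polynomial.X ^ (complEquiv S).card).eval ζ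
  have h4 : complEquiv S = Sᶜ := rfl
  rw [h4, h1]
  simp [mul_comm]

theorem tendsto_Xi_eval (A B : Matrix (Fin n) (Fin n) ℂ) (ζ : ℂ) :
    Filter.Tendsto (fun u : ℝ => (Xi A (-B) u).eval ζ) (nhdsWithin 0 (Set.Ioi 0))
      (nhds ((etaPoly A (-B)).eval ζ)) := by
  have heq : ∀ u : ℝ, (Xi A (-B) u).eval ζ
      = ∑ S : Finset (Fin n), ∑ T : Finset (Fin n),
          gam u S T * (cST A (-B) S T).eval ζ := by
    intro u
    rw [Xi_eq, Polynomial.eval_finset_sum]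
    refine Finset.sum_congr rfl fun S _ => ?_
    rw [Polynomial.eval_finset_sum]
    refine Finset.sum_congr rfl fun T _ => ?_
    simp
  simp only [heq]
  have hcont : Continuous (fun u : ℝ => ∑ S : Finset (Fin n), ∑ T : Finset (Fin n),
      gam u S T * (cST A (-B) S T).eval ζ) := by
    refine continuous_finset_sum _ fun S _ => continuous_finset_sum _ fun T _ => ?_
    refine Continuous.mul ?_ continuous_const
    unfold gam
    refine continuous_finset_prod _ fun j _ => ?_
    fun_prop
  have hval : (∑ S : Finset (Fin n), ∑ T : Finset (Fin n),
      gam 0 S T * (cST A (-B) S T).eval ζ) = (etaPoly A (-B)).eval ζ := by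
    have h1 : ∀ S : Finset (Fin n), (∑ T : Finset (Fin n),
        gam 0 S T * (cST A (-B) S T).eval ζ) = (cST A (-B) S Sᶜ).eval ζ := by
      intro S
      rw [Finset.sum_eq_single Sᶜ]
      · rw [gam_zero, if_pos rfl, one_mul]
      · intro T _ hT
        rw [gam_zero, if_neg hT, zero_mul]
      · intro h
        exact absurd (Finset.mem_univ _) h
    simp only [h1]
    exact sum_cST_eval A B ζ
  have := hcont.tendsto 0
  rw [hval] at this
  exact tendsto_nhdsWithin_of_tendsto_nhds this



theorem prod_map_le (s : Multiset ℂ) (f g : ℂ → ℝ) (h0 : ∀ x ∈ s, 0 ≤ f x)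
    (h : ∀ x ∈ s, f x ≤ g x) : (s.map f).prod ≤ (s.map g).prod := by
  induction s using Multiset.induction_on with
  | empty => simp
  | cons a t ih =>
    simp only [Multiset.map_cons, Multiset.prod_cons]
    have hf0 : 0 ≤ f a := h0 a (Multiset.mem_cons_self a t)
    have hfg : f a ≤ g a := h a (Multiset.mem_cons_self a t)
    have ht0 : 0 ≤ (t.map f).prod := by
      apply Multiset.prod_nonneg
      intro x hx
      obtain ⟨y, hy, rfl⟩ := Multiset.mem_map.mp hx
      exact h0 y (Multiset.mem_cons_of_mem hy)
    have iht := ih (fun x hx => h0 x (Multiset.mem_cons_of_mem hx))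
      (fun x hx => h x (Multiset.mem_cons_of_mem hx))
    have hg0 : 0 ≤ g a := le_trans hf0 hfg
    nlinarith

/-- quantitative Hurwitz-type bound -/
theorem keyQ (q : Polynomial ℂ) (hq : ∀ t : ℂ, 0 < t.im → q.eval t ≠ 0) (N : ℕ)
    (hd : q.natDegree ≤ N) (z₀ w : ℂ) (h0 : 0 < z₀.im)
    (hw : ‖w - z₀‖ ≤ z₀.im) :
    ‖q.eval w‖ ≤ 2^N * ‖q.eval z₀‖ := by
  have hq0 : q ≠ 0 := by
    intro h
    exact hq Complex.I (by simp) (by simp [h])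
  have hroots : ∀ r ∈ q.roots, r.im ≤ 0 := by
    intro r hr
    by_contra h
    exact hq r (lt_of_not_ge h) ((Polynomial.mem_roots'.mp hr).2)
  have hfac := (IsAlgClosed.splits q).eq_prod_roots
  have hcard : q.roots.card ≤ N := by
    have := (IsAlgClosed.splits q).natDegree_eq_card_roots
    omega
  have hev : ∀ t : ℂ, ‖q.eval t‖
      = ‖q.leadingCoeff‖ * ((q.roots.map fun r => ‖t - r‖).prod) := by
    intro t
    conv_lhs => rw [hfac]
    rw [Polynomial.eval_mul, Polynomial.eval_C, norm_mul, eval_prod_roots]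
    congr 1
    rw [show ∀ m : Multiset ℂ, ‖m.prod‖ = (m.map (‖·‖)).prod from
        fun m => map_multiset_prod (normHom : ℂ →*₀ ℝ) m, Multiset.map_map]
    rfl
  have hzim : ∀ r ∈ q.roots, z₀.im ≤ ‖z₀ - r‖ := by
    intro r hr
    have h1 : z₀.im ≤ (z₀ - r).im := by
      rw [Complex.sub_im]
      have := hroots r hr
      linarith
    calc z₀.im ≤ (z₀ - r).im := h1
      _ ≤ |(z₀ - r).im| := le_abs_self _
      _ ≤ ‖z₀ - r‖ := Complex.abs_im_le_norm _
  have hle : ∀ r ∈ q.roots, ‖w - r‖ ≤ 2 * ‖z₀ - r‖ := by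
    intro r hr
    have h1 : ‖w - r‖ ≤ ‖w - z₀‖ + ‖z₀ - r‖ := by
      have : w - r = (w - z₀) + (z₀ - r) := by ring
      rw [this]
      exact norm_add_le _ _
    have h2 := hzim r hr
    linarith
  rw [hev w, hev z₀]
  have hstep : ((q.roots.map fun r => ‖w - r‖).prod)
      ≤ 2 ^ q.roots.card * ((q.roots.map fun r => ‖z₀ - r‖).prod) := by
    have h1 : ((q.roots.map fun r => ‖w - r‖).prod)
        ≤ ((q.roots.map fun r => 2 * ‖z₀ - r‖).prod) := by
      apply prod_map_le
      · intro x _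
        exact norm_nonneg _
      · exact hle
    have h2 : ((q.roots.map fun r => 2 * ‖z₀ - r‖).prod)
        = 2 ^ q.roots.card * ((q.roots.map fun r => ‖z₀ - r‖).prod) := by
      rw [Multiset.prod_map_mul]
      congr 1
      have : (q.roots.map fun _ => (2:ℝ)) = Multiset.replicate q.roots.card 2 := by
        rw [Multiset.map_const']
      rw [this, Multiset.prod_replicate]
    rw [h2] at h1
    exact h1
  have habs0 : (0:ℝ) ≤ ‖q.leadingCoeff‖ := norm_nonneg _
  have hprodz : (0:ℝ) ≤ ((q.roots.map fun r => ‖z₀ - r‖).prod) := by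
    apply Multiset.prod_nonneg
    intro x hx
    obtain ⟨y, hy, rfl⟩ := Multiset.mem_map.mp hx
    exact norm_nonneg _
  have h2N : (2:ℝ) ^ q.roots.card ≤ 2 ^ N := by
    apply pow_le_pow_right₀ (by norm_num) hcard
  calc ‖q.leadingCoeff‖ * ((q.roots.map fun r => ‖w - r‖).prod)
      ≤ ‖q.leadingCoeff‖
        * (2 ^ q.roots.card * ((q.roots.map fun r => ‖z₀ - r‖).prod)) := by
        apply mul_le_mul_of_nonneg_left hstep habs0
    _ ≤ ‖q.leadingCoeff‖
        * (2 ^ N * ((q.roots.map fun r => ‖z₀ - r‖).prod)) := by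
        apply mul_le_mul_of_nonneg_left _ habs0
        apply mul_le_mul_of_nonneg_right h2N hprodz
    _ = 2 ^ N * (‖q.leadingCoeff‖
        * ((q.roots.map fun r => ‖z₀ - r‖).prod)) := by ring

theorem stabEta (A B : Matrix (Fin n) (Fin n) ℂ) (hA : A.PosSemidef) (hB : B.IsHermitian)
    (hη : etaPoly A (-B) ≠ 0) : ∀ z : ℂ, 0 < z.im → (etaPoly A (-B)).eval z ≠ 0 := by
  intro z₀ h0 heval
  have hfin := Polynomial.finite_setOf_isRoot hη
  have hinj : Set.InjOn (fun t : ℝ => z₀ + (t:ℂ)) (Set.Ioc 0 z₀.im) := by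
    intro a _ b _ h
    have h2 := add_left_cancel h
    exact_mod_cast h2
  have hinf : ((fun t : ℝ => z₀ + (t:ℂ)) '' (Set.Ioc 0 z₀.im)).Infinite :=
    (Set.Ioc_infinite h0).image hinj
  obtain ⟨w, hwmem, hwroot⟩ : ∃ w ∈ (fun t : ℝ => z₀ + (t:ℂ)) '' (Set.Ioc 0 z₀.im),
      ¬ (etaPoly A (-B)).IsRoot w := by
    by_contra hall
    push_neg at hall
    exact hinf (hfin.subset hall)
  obtain ⟨t, ht, rfl⟩ := hwmem
  have hineq : ∀ u : ℝ, 0 < u → ‖(Xi A (-B) u).eval (z₀ + (t:ℂ))‖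
      ≤ 2^n * ‖(Xi A (-B) u).eval z₀‖ := by
    intro u hu
    refine keyQ _ (stab_Xi A B hA hB u hu) n (deg_Xi A (-B) u) z₀ _ h0 ?_
    have : z₀ + (t:ℂ) - z₀ = (t:ℂ) := by ring
    rw [this, Complex.norm_real, Real.norm_eq_abs, abs_of_pos ht.1]
    exact ht.2
  have hT1 : Filter.Tendsto (fun u : ℝ => ‖(Xi A (-B) u).eval (z₀ + (t:ℂ))‖)
      (nhdsWithin 0 (Set.Ioi 0)) (nhds (‖(etaPoly A (-B)).eval (z₀ + (t:ℂ))‖)) :=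
    (continuous_norm.tendsto _).comp (tendsto_Xi_eval A B (z₀ + (t:ℂ)))
  have hT2 : Filter.Tendsto (fun u : ℝ => 2^n * ‖(Xi A (-B) u).eval z₀‖)
      (nhdsWithin 0 (Set.Ioi 0)) (nhds (2^n * ‖(etaPoly A (-B)).eval z₀‖)) :=
    Filter.Tendsto.const_mul _ ((continuous_norm.tendsto _).comp
      (tendsto_Xi_eval A B z₀))
  have hev : ∀ᶠ u in nhdsWithin (0:ℝ) (Set.Ioi 0),
      ‖(Xi A (-B) u).eval (z₀ + (t:ℂ))‖
        ≤ 2^n * ‖(Xi A (-B) u).eval z₀‖ := by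
    filter_upwards [self_mem_nhdsWithin] with u hu
    exact hineq u hu
  have hle := le_of_tendsto_of_tendsto hT1 hT2 hev
  rw [heval] at hle
  simp only [map_zero, norm_zero, mul_zero] at hle
  have : ‖(etaPoly A (-B)).eval (z₀ + (t:ℂ))‖ = 0 := le_antisymm hle (norm_nonneg _)
  exact hwroot (norm_eq_zero.mp this)

theorem herm_det_star {M : Matrix (Fin n) (Fin n) ℂ} (hM : M.IsHermitian)
    (W : Finset (Fin n)) :
    (starRingEnd ℂ) ((principalSub M W).det) = (principalSub M W).det := by
  rw [RingHom.map_det]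
  have h1 : (starRingEnd ℂ).mapMatrix (principalSub M W) = (principalSub M W)ᵀ := by
    ext i j
    show (starRingEnd ℂ) (M (i:Fin n) (j:Fin n)) = M (j:Fin n) (i:Fin n)
    calc (starRingEnd ℂ) (M (i:Fin n) (j:Fin n)) = Mᴴ (j:Fin n) (i:Fin n) := rfl
      _ = M (j:Fin n) (i:Fin n) := by rw [show Mᴴ = M from hM]
  rw [h1, Matrix.det_transpose]

theorem eta_real (A B : Matrix (Fin n) (Fin n) ℂ) (hA : A.PosSemidef) (hB : B.IsHermitian) :
    (etaPoly A (-B)).map (starRingEnd ℂ) = etaPoly A (-B) := by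
  unfold etaPoly
  rw [Polynomial.map_sum]
  refine Finset.sum_congr rfl fun S _ => ?_
  rw [Polynomial.map_mul, Polynomial.map_C, Polynomial.map_pow, Polynomial.map_X]
  congr 1
  rw [map_mul (starRingEnd ℂ), herm_det_star hA.1 S, herm_det_star hB.neg Sᶜ]

end Main

end Stmt2Aux

theorem stmt2 (n : ℕ) (A B : Matrix (Fin n) (Fin n) ℂ)
    (hA : A.PosSemidef) (hB : B.IsHermitian) :
    etaPoly A (-B) = 0 ∨ ∀ z : ℂ, (etaPoly A (-B)).eval z = 0 → z.im = 0 := by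
  by_cases h : etaPoly A (-B) = 0
  · exact Or.inl h
  · right
    intro z hz
    by_contra him
    have hstab := Stmt2Aux.stabEta A B hA hB h
    rcases lt_trichotomy z.im 0 with hlt | heq | hgt
    · have h1 : ((starRingEnd ℂ) z).im > 0 := by
        simpa using neg_pos.mpr hlt
      have h2 : (etaPoly A (-B)).eval ((starRingEnd ℂ) z) = 0 := by
        have := Stmt2Aux.eta_real A B hA hB
        calc (etaPoly A (-B)).eval ((starRingEnd ℂ) z)
            = ((etaPoly A (-B)).map (starRingEnd ℂ)).eval ((starRingEnd ℂ) z) := by rw [this]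
          _ = (starRingEnd ℂ) ((etaPoly A (-B)).eval z) := by
              rw [Polynomial.eval_map]
              have : (etaPoly A (-B)).eval z = (etaPoly A (-B)).eval₂ (RingHom.id ℂ) z := by
                rfl
              rw [this, Polynomial.hom_eval₂]
              simp
          _ = 0 := by rw [hz]; simp
      exact hstab _ h1 h2
    · exact him heq
    · exact hstab z hgt hz
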